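/- Let J₊⁻¹(z) = z − √(z−1)·√(z+1) with principal branch square roots. For every x ∈ (−1,1): lim_{ε→0⁺} J₊⁻¹(x+iε) = x − i·√(1−x)·√(1+x) and lim_{ε→0⁺} J₊⁻¹(x−iε) = x + i·√(1−x)·√(1+x); moreover, for every integer k ≥ 0, (x − i√(1−x²))^k + (x + i√(1−x²))^k = 2·T_k(x), where T_k is the k-th Chebyshev polynomial of the first kind. Consequently the sum of the two one-sided boundary values of J₊⁻¹(·)^k at x equals 2·T_k(x). -/

import Mathlib

open Complex Filter Topology

/-- The inverse Joukowski transform `J₊⁻¹(z) = z − √(z−1)·√(z+1)`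
(principal branch square roots). -/
noncomputable def JoukowskiInv (z : ℂ) : ℂ :=
  z - (z - 1) ^ ((1 : ℂ) / 2) * (z + 1) ^ ((1 : ℂ) / 2)

lemma exp_half_log_add_aux (a : ℝ) (ha : 0 < a) :
    Complex.exp (((Real.log a : ℂ) + Real.pi * Complex.I) * (1/2)) =
      Complex.I * (Real.sqrt a : ℂ) := by
  have h : ((Real.log a : ℂ) + Real.pi * Complex.I) * (1/2)
      = ((Real.log a / 2 : ℝ) : ℂ) + ((Real.pi/2 : ℝ) : ℂ) * Complex.I := by
    push_cast; ring
  rw [h, Complex.exp_add_mul_I, ← Complex.ofReal_cos, ← Complex.ofReal_sin,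
    Real.cos_pi_div_two, Real.sin_pi_div_two, ← Complex.ofReal_exp,
    ← Real.log_sqrt ha.le, Real.exp_log (Real.sqrt_pos.2 ha)]
  push_cast; ring

lemma exp_half_log_sub_aux (a : ℝ) (ha : 0 < a) :
    Complex.exp (((Real.log a : ℂ) - Real.pi * Complex.I) * (1/2)) =
      -Complex.I * (Real.sqrt a : ℂ) := by
  have h : ((Real.log a : ℂ) - Real.pi * Complex.I) * (1/2)
      = ((Real.log a / 2 : ℝ) : ℂ) + ((-(Real.pi/2) : ℝ) : ℂ) * Complex.I := by
    push_cast; ring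
  rw [h, Complex.exp_add_mul_I, ← Complex.ofReal_cos, ← Complex.ofReal_sin,
    Real.cos_neg, Real.sin_neg, Real.cos_pi_div_two, Real.sin_pi_div_two,
    ← Complex.ofReal_exp, ← Real.log_sqrt ha.le, Real.exp_log (Real.sqrt_pos.2 ha)]
  push_cast; ring

lemma sqrt_fac_upper_aux (x : ℝ) (hx : x ∈ Set.Ioo (-1:ℝ) 1) :
    Tendsto (fun ε : ℝ => ((x : ℂ) + ε * Complex.I - 1) ^ ((1:ℂ)/2))
      (nhdsWithin 0 (Set.Ioi 0)) (nhds (Complex.I * (Real.sqrt (1 - x) : ℂ))) := by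
  have hre : ((x : ℂ) - 1).re < 0 := by simp [hx.2, sub_neg]
  have him : ((x : ℂ) - 1).im = 0 := by simp
  have hpath : Tendsto (fun ε : ℝ => (x : ℂ) + ε * Complex.I - 1)
      (nhdsWithin 0 (Set.Ioi 0)) (nhdsWithin ((x : ℂ) - 1) { z : ℂ | 0 ≤ z.im }) := by
    apply tendsto_nhdsWithin_of_tendsto_nhds_of_eventually_within
    · have : Tendsto (fun ε : ℝ => (x : ℂ) + ε * Complex.I - 1) (nhds 0)
          (nhds ((x : ℂ) + (0:ℝ) * Complex.I - 1)) := by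
        apply Tendsto.sub_const
        exact tendsto_const_nhds.add ((Complex.continuous_ofReal.tendsto 0).mul_const _)
      simpa using this.mono_left nhdsWithin_le_nhds
    · filter_upwards [self_mem_nhdsWithin] with ε (hε : 0 < ε)
      simp [hε.le]
  have hlog := (Complex.tendsto_log_nhdsWithin_im_nonneg_of_re_neg_of_im_zero hre him).comp hpath
  have habs : ‖(x : ℂ) - 1‖ = 1 - x := by
    rw [show ((x : ℂ) - 1) = ((x - 1 : ℝ) : ℂ) by push_cast; ring, Complex.norm_real, Real.norm_eq_abs,
      abs_of_neg (by linarith [hx.2])]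
    ring
  rw [habs] at hlog
  have hexp : Tendsto (fun ε : ℝ =>
      Complex.exp (Complex.log ((x : ℂ) + ε * Complex.I - 1) * ((1:ℂ)/2)))
      (nhdsWithin 0 (Set.Ioi 0))
      (nhds (Complex.exp (((Real.log (1-x) : ℂ) + Real.pi * Complex.I) * (1/2)))) :=
    (Complex.continuous_exp.tendsto _).comp (hlog.mul_const _)
  rw [exp_half_log_add_aux (1-x) (by linarith [hx.2])] at hexp
  apply hexp.congr'
  filter_upwards [self_mem_nhdsWithin] with ε (hε : 0 < ε)
  rw [Complex.cpow_def_of_ne_zero]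
  intro h
  have := congrArg Complex.im h
  simp [hε.ne'] at this

lemma sqrt_fac_lower_aux (x : ℝ) (hx : x ∈ Set.Ioo (-1:ℝ) 1) :
    Tendsto (fun ε : ℝ => ((x : ℂ) - ε * Complex.I - 1) ^ ((1:ℂ)/2))
      (nhdsWithin 0 (Set.Ioi 0)) (nhds (-Complex.I * (Real.sqrt (1 - x) : ℂ))) := by
  have hre : ((x : ℂ) - 1).re < 0 := by simp [hx.2, sub_neg]
  have him : ((x : ℂ) - 1).im = 0 := by simp
  have hpath : Tendsto (fun ε : ℝ => (x : ℂ) - ε * Complex.I - 1)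
      (nhdsWithin 0 (Set.Ioi 0)) (nhdsWithin ((x : ℂ) - 1) { z : ℂ | z.im < 0 }) := by
    apply tendsto_nhdsWithin_of_tendsto_nhds_of_eventually_within
    · have : Tendsto (fun ε : ℝ => (x : ℂ) - ε * Complex.I - 1) (nhds 0)
          (nhds ((x : ℂ) - (0:ℝ) * Complex.I - 1)) := by
        apply Tendsto.sub_const
        exact tendsto_const_nhds.sub ((Complex.continuous_ofReal.tendsto 0).mul_const _)
      simpa using this.mono_left nhdsWithin_le_nhds
    · filter_upwards [self_mem_nhdsWithin] with ε (hε : 0 < ε)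
      simpa using hε
  have hlog := (Complex.tendsto_log_nhdsWithin_im_neg_of_re_neg_of_im_zero hre him).comp hpath
  have habs : ‖(x : ℂ) - 1‖ = 1 - x := by
    rw [show ((x : ℂ) - 1) = ((x - 1 : ℝ) : ℂ) by push_cast; ring, Complex.norm_real, Real.norm_eq_abs,
      abs_of_neg (by linarith [hx.2])]
    ring
  rw [habs] at hlog
  have hexp : Tendsto (fun ε : ℝ =>
      Complex.exp (Complex.log ((x : ℂ) - ε * Complex.I - 1) * ((1:ℂ)/2)))
      (nhdsWithin 0 (Set.Ioi 0))
      (nhds (Complex.exp (((Real.log (1-x) : ℂ) - Real.pi * Complex.I) * (1/2)))) :=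
    (Complex.continuous_exp.tendsto _).comp (hlog.mul_const _)
  rw [exp_half_log_sub_aux (1-x) (by linarith [hx.2])] at hexp
  apply hexp.congr'
  filter_upwards [self_mem_nhdsWithin] with ε (hε : 0 < ε)
  rw [Complex.cpow_def_of_ne_zero]
  intro h
  have := congrArg Complex.im h
  simp [hε.ne'] at this

lemma cpow_half_ofReal_pos (a : ℝ) (ha : 0 ≤ a) :
    ((a : ℂ)) ^ ((1:ℂ)/2) = (Real.sqrt a : ℂ) := by
  rw [show ((1:ℂ)/2) = (((1/2 : ℝ)) : ℂ) by norm_num, ← Complex.ofReal_cpow ha,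
    Real.sqrt_eq_rpow]

lemma cheb_aux (x : ℝ) (hx : x ∈ Set.Ioo (-1:ℝ) 1) (k : ℕ) :
    ((x : ℂ) - Complex.I * (Real.sqrt (1 - x ^ 2) : ℂ)) ^ k +
        ((x : ℂ) + Complex.I * (Real.sqrt (1 - x ^ 2) : ℂ)) ^ k =
      2 * (Polynomial.Chebyshev.T ℂ (k : ℤ)).eval (x : ℂ) := by
  set θ : ℝ := Real.arccos x with hθ
  have hcos : (x : ℂ) = Complex.cos θ := by
    rw [← Complex.ofReal_cos, Real.cos_arccos hx.1.le hx.2.le]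
  have hsin : ((Real.sqrt (1 - x ^ 2) : ℝ) : ℂ) = Complex.sin θ := by
    rw [← Complex.ofReal_sin, Real.sin_arccos]
  have h1 : (x : ℂ) + Complex.I * (Real.sqrt (1 - x ^ 2) : ℂ) = Complex.exp (θ * Complex.I) := by
    rw [Complex.exp_mul_I, hcos, hsin]; ring
  have h2 : (x : ℂ) - Complex.I * (Real.sqrt (1 - x ^ 2) : ℂ) = Complex.exp (-θ * Complex.I) := by
    rw [Complex.exp_mul_I, Complex.cos_neg, Complex.sin_neg, hcos, hsin]; ring
  have hT : (Polynomial.Chebyshev.T ℂ (k : ℤ)).eval (x : ℂ) = Complex.cos ((k : ℂ) * θ) := by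
    rw [hcos, Polynomial.Chebyshev.T_complex_cos]; norm_num
  rw [h1, h2, hT, ← Complex.exp_nat_mul, ← Complex.exp_nat_mul]
  have e1 : ((k : ℂ)) * (-θ * Complex.I) = (-((k:ℂ) * θ)) * Complex.I := by ring
  have e2 : ((k : ℂ)) * (θ * Complex.I) = ((k:ℂ) * θ) * Complex.I := by ring
  rw [e1, e2, Complex.exp_mul_I, Complex.exp_mul_I, Complex.cos_neg, Complex.sin_neg]
  ring

lemma sqrt_mul_sqrt_aux (x : ℝ) (hx : x ∈ Set.Ioo (-1:ℝ) 1) :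
    Real.sqrt (1 - x) * Real.sqrt (1 + x) = Real.sqrt (1 - x ^ 2) := by
  rw [← Real.sqrt_mul (by linarith [hx.2])]
  ring_nf

/-- **Boundary values of the inverse Joukowski transform and the Chebyshev identity.**
For `x ∈ (−1,1)`: `lim_{ε→0⁺} J₊⁻¹(x+iε) = x − i√(1−x)√(1+x)` and
`lim_{ε→0⁺} J₊⁻¹(x−iε) = x + i√(1−x)√(1+x)`; moreover, for every `k ≥ 0`,
`(x − i√(1−x²))^k + (x + i√(1−x²))^k = 2·T_k(x)`.  Consequently the sum of the two
one-sided boundary values of `J₊⁻¹(·)^k` at `x` equals `2·T_k(x)`. -/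
theorem joukowskiInv_boundary_values (x : ℝ) (hx : x ∈ Set.Ioo (-1 : ℝ) 1) :
    Tendsto (fun ε : ℝ => JoukowskiInv ((x : ℂ) + ε * Complex.I))
      (nhdsWithin 0 (Set.Ioi 0))
      (nhds ((x : ℂ) - Complex.I * (Real.sqrt (1 - x) : ℂ) * (Real.sqrt (1 + x) : ℂ))) ∧
    Tendsto (fun ε : ℝ => JoukowskiInv ((x : ℂ) - ε * Complex.I))
      (nhdsWithin 0 (Set.Ioi 0))
      (nhds ((x : ℂ) + Complex.I * (Real.sqrt (1 - x) : ℂ) * (Real.sqrt (1 + x) : ℂ))) ∧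
    (∀ k : ℕ,
      ((x : ℂ) - Complex.I * (Real.sqrt (1 - x ^ 2) : ℂ)) ^ k +
          ((x : ℂ) + Complex.I * (Real.sqrt (1 - x ^ 2) : ℂ)) ^ k =
        2 * (Polynomial.Chebyshev.T ℂ (k : ℤ)).eval (x : ℂ)) ∧
    (∀ k : ℕ,
      ((x : ℂ) - Complex.I * (Real.sqrt (1 - x) : ℂ) * (Real.sqrt (1 + x) : ℂ)) ^ k +
          ((x : ℂ) + Complex.I * (Real.sqrt (1 - x) : ℂ) * (Real.sqrt (1 + x) : ℂ)) ^ k =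
        2 * (Polynomial.Chebyshev.T ℂ (k : ℤ)).eval (x : ℂ)) := by
  have hq : (Real.sqrt (1 - x) : ℂ) * (Real.sqrt (1 + x) : ℂ) = (Real.sqrt (1 - x ^ 2) : ℂ) := by
    rw [← Complex.ofReal_mul, sqrt_mul_sqrt_aux x hx]
  -- second factor continuity
  have hfac2 : ∀ s : ℝ → ℂ, Continuous s →
      Tendsto (fun ε : ℝ => ((x : ℂ) + s ε + 1) ^ ((1:ℂ)/2)) (nhdsWithin 0 (Set.Ioi 0))
        (nhds ((Real.sqrt (1 + x) : ℂ))) → True := fun _ _ _ => trivial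
  have hplus : Tendsto (fun ε : ℝ => ((x : ℂ) + ε * Complex.I + 1) ^ ((1:ℂ)/2))
      (nhdsWithin 0 (Set.Ioi 0)) (nhds ((Real.sqrt (1 + x) : ℂ))) := by
    have hc : ContinuousAt (fun z : ℂ => z ^ ((1:ℂ)/2)) ((x : ℂ) + 1) :=
      continuousAt_cpow_const (Complex.mem_slitPlane_iff.2 (Or.inl (by simp; linarith [hx.1])))
    have hpath : Tendsto (fun ε : ℝ => (x : ℂ) + ε * Complex.I + 1) (nhdsWithin 0 (Set.Ioi 0))
        (nhds ((x : ℂ) + 1)) := by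
      have : Tendsto (fun ε : ℝ => (x : ℂ) + ε * Complex.I + 1) (nhds 0)
          (nhds ((x : ℂ) + (0:ℝ) * Complex.I + 1)) :=
        Tendsto.add_const _ (tendsto_const_nhds.add ((Complex.continuous_ofReal.tendsto 0).mul_const _))
      simpa using this.mono_left nhdsWithin_le_nhds
    have := hc.tendsto.comp hpath
    have hval : ((x : ℂ) + 1) ^ ((1:ℂ)/2) = (Real.sqrt (1 + x) : ℂ) := by
      rw [show ((x : ℂ) + 1) = (((1 + x : ℝ)) : ℂ) by push_cast; ring,
        cpow_half_ofReal_pos (1 + x) (by linarith [hx.1])]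
    rwa [hval] at this
  have hminus : Tendsto (fun ε : ℝ => ((x : ℂ) - ε * Complex.I + 1) ^ ((1:ℂ)/2))
      (nhdsWithin 0 (Set.Ioi 0)) (nhds ((Real.sqrt (1 + x) : ℂ))) := by
    have hc : ContinuousAt (fun z : ℂ => z ^ ((1:ℂ)/2)) ((x : ℂ) + 1) :=
      continuousAt_cpow_const (Complex.mem_slitPlane_iff.2 (Or.inl (by simp; linarith [hx.1])))
    have hpath : Tendsto (fun ε : ℝ => (x : ℂ) - ε * Complex.I + 1) (nhdsWithin 0 (Set.Ioi 0))
        (nhds ((x : ℂ) + 1)) := by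
      have : Tendsto (fun ε : ℝ => (x : ℂ) - ε * Complex.I + 1) (nhds 0)
          (nhds ((x : ℂ) - (0:ℝ) * Complex.I + 1)) :=
        Tendsto.add_const _ (tendsto_const_nhds.sub ((Complex.continuous_ofReal.tendsto 0).mul_const _))
      simpa using this.mono_left nhdsWithin_le_nhds
    have := hc.tendsto.comp hpath
    have hval : ((x : ℂ) + 1) ^ ((1:ℂ)/2) = (Real.sqrt (1 + x) : ℂ) := by
      rw [show ((x : ℂ) + 1) = (((1 + x : ℝ)) : ℂ) by push_cast; ring,
        cpow_half_ofReal_pos (1 + x) (by linarith [hx.1])]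
    rwa [hval] at this
  have hz_up : Tendsto (fun ε : ℝ => (x : ℂ) + ε * Complex.I) (nhdsWithin 0 (Set.Ioi 0))
      (nhds (x : ℂ)) := by
    have : Tendsto (fun ε : ℝ => (x : ℂ) + ε * Complex.I) (nhds 0)
        (nhds ((x : ℂ) + (0:ℝ) * Complex.I)) :=
      tendsto_const_nhds.add ((Complex.continuous_ofReal.tendsto 0).mul_const _)
    simpa using this.mono_left nhdsWithin_le_nhds
  have hz_dn : Tendsto (fun ε : ℝ => (x : ℂ) - ε * Complex.I) (nhdsWithin 0 (Set.Ioi 0))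
      (nhds (x : ℂ)) := by
    have : Tendsto (fun ε : ℝ => (x : ℂ) - ε * Complex.I) (nhds 0)
        (nhds ((x : ℂ) - (0:ℝ) * Complex.I)) :=
      tendsto_const_nhds.sub ((Complex.continuous_ofReal.tendsto 0).mul_const _)
    simpa using this.mono_left nhdsWithin_le_nhds
  refine ⟨?_, ?_, fun k => cheb_aux x hx k, ?_⟩
  · have := hz_up.sub ((sqrt_fac_upper_aux x hx).mul hplus)
    simpa [JoukowskiInv, mul_assoc] using this
  · have := hz_dn.sub ((sqrt_fac_lower_aux x hx).mul hminus)
    have h2 : (x : ℂ) - -Complex.I * (Real.sqrt (1 - x) : ℂ) * (Real.sqrt (1 + x) : ℂ)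
        = (x : ℂ) + Complex.I * (Real.sqrt (1 - x) : ℂ) * (Real.sqrt (1 + x) : ℂ) := by ring
    rw [← h2]
    simpa [JoukowskiInv, mul_assoc] using this
  · intro k
    rw [show ((x : ℂ) - Complex.I * (Real.sqrt (1 - x) : ℂ) * (Real.sqrt (1 + x) : ℂ))
        = ((x : ℂ) - Complex.I * (Real.sqrt (1 - x ^ 2) : ℂ)) by rw [← hq]; ring,
      show ((x : ℂ) + Complex.I * (Real.sqrt (1 - x) : ℂ) * (Real.sqrt (1 + x) : ℂ))
        = ((x : ℂ) + Complex.I * (Real.sqrt (1 - x ^ 2) : ℂ)) by rw [← hq]; ring]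
    exact cheb_aux x hx k
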